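/- Let R^y_e and R̃^y_e be Hermitian N×N matrices and σ² > 0. Define σ̂² = (1/(N−s)) ∑_{l=s}^{N-1} λ_l(R̃^y_e) where λ_0 ≥ … ≥ λ_{N-1} are the eigenvalues of R̃^y_e in decreasing order, and suppose R^y_e = R^y + σ² I_N where R^y is Hermitian PSD of rank at most s. With R̂^y = R̃^y_e − σ̂² I_N, we have ‖R^y − R̂^y‖ ≤ ‖R^y_e − R̃^y_e‖ + |σ² − σ̂²| ≤ 2 ‖R^y_e − R̃^y_e‖. -/

import Mathlib

open Complex Matrix
open scoped ComplexOrder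

/-- Spectral (ℓ²-operator) norm of a square complex matrix. -/
noncomputable def specNorm {N : ℕ} (M : Matrix (Fin N) (Fin N) ℂ) : ℝ :=
  ‖Matrix.toEuclideanCLM (𝕜 := ℂ) M‖

variable {N : ℕ}

lemma clm_apply (M : Matrix (Fin N) (Fin N) ℂ) (v : EuclideanSpace ℂ (Fin N)) :
    Matrix.toEuclideanCLM (𝕜 := ℂ) M v = (WithLp.equiv 2 _).symm (M *ᵥ (WithLp.equiv 2 _ v)) := rfl

lemma re_inner_le (M : Matrix (Fin N) (Fin N) ℂ) (v : EuclideanSpace ℂ (Fin N)) (hv : ‖v‖ = 1) :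
    |Complex.re (@inner ℂ _ _ v (Matrix.toEuclideanCLM (𝕜 := ℂ) M v))| ≤ specNorm M := by
  have h1 : ‖@inner ℂ _ _ v (Matrix.toEuclideanCLM (𝕜 := ℂ) M v)‖ ≤ specNorm M := by
    calc ‖@inner ℂ _ _ v (Matrix.toEuclideanCLM (𝕜 := ℂ) M v)‖
        ≤ ‖v‖ * ‖Matrix.toEuclideanCLM (𝕜 := ℂ) M v‖ := norm_inner_le_norm _ _
      _ ≤ ‖v‖ * (specNorm M * ‖v‖) := by
          gcongr; exact (Matrix.toEuclideanCLM (𝕜 := ℂ) M).le_opNorm v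
      _ = specNorm M := by rw [hv]; ring
  exact le_trans (Complex.abs_re_le_norm _) h1

-- Parseval
lemma parseval (b : OrthonormalBasis (Fin N) ℂ (EuclideanSpace ℂ (Fin N)))
    (v : EuclideanSpace ℂ (Fin N)) :
    ∑ i, ‖b.repr v i‖ ^ 2 = ‖v‖ ^ 2 := by
  have h := b.repr.norm_map v
  rw [EuclideanSpace.norm_eq] at h
  rw [← h, Real.sq_sqrt]
  exact Finset.sum_nonneg fun i _ => sq_nonneg _

-- re ⟪v, Ry v⟫ ≥ 0 for PSD
lemma psd_re_nonneg {Ry : Matrix (Fin N) (Fin N) ℂ} (hRy : Ry.PosSemidef)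
    (v : EuclideanSpace ℂ (Fin N)) :
    0 ≤ Complex.re (@inner ℂ _ _ v (Matrix.toEuclideanCLM (𝕜 := ℂ) Ry v)) := by
  rw [clm_apply, EuclideanSpace.inner_eq_star_dotProduct, dotProduct_comm]
  simpa using hRy.re_dotProduct_nonneg ((WithLp.equiv 2 _) v)


lemma clm_eigen {M : Matrix (Fin N) (Fin N) ℂ} (hM : M.IsHermitian) (j : Fin N) :
    Matrix.toEuclideanCLM (𝕜 := ℂ) M (hM.eigenvectorBasis j) =
      (hM.eigenvalues j : ℂ) • (hM.eigenvectorBasis j) := by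
  ext i
  have h := congrFun (hM.mulVec_eigenvectorBasis j) i
  simp only [Pi.smul_apply] at h
  simp only [clm_apply, WithLp.equiv_symm_apply, PiLp.toLp_apply, PiLp.smul_apply, smul_eq_mul]
  rw [show (WithLp.equiv 2 (Fin N → ℂ)) (hM.eigenvectorBasis j) = ⇑(hM.eigenvectorBasis j) from rfl]
  rw [h, Complex.real_smul]

lemma clm_selfAdjoint {M : Matrix (Fin N) (Fin N) ℂ} (hM : M.IsHermitian) :
    _root_.IsSelfAdjoint (Matrix.toEuclideanCLM (𝕜 := ℂ) M) := by
  show star _ = _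
  rw [← map_star]
  exact congrArg _ hM

lemma repr_clm {M : Matrix (Fin N) (Fin N) ℂ} (hM : M.IsHermitian)
    (v : EuclideanSpace ℂ (Fin N)) (j : Fin N) :
    hM.eigenvectorBasis.repr (Matrix.toEuclideanCLM (𝕜 := ℂ) M v) j
      = (hM.eigenvalues j : ℂ) * hM.eigenvectorBasis.repr v j := by
  set b := hM.eigenvectorBasis
  rw [b.repr_apply_apply, b.repr_apply_apply]
  rw [← (clm_selfAdjoint hM).adjoint_eq, ContinuousLinearMap.adjoint_inner_right,
    clm_eigen hM, inner_smul_left, Complex.conj_ofReal]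

lemma re_inner_eigen {M : Matrix (Fin N) (Fin N) ℂ} (hM : M.IsHermitian)
    (v : EuclideanSpace ℂ (Fin N)) :
    Complex.re (@inner ℂ _ _ v (Matrix.toEuclideanCLM (𝕜 := ℂ) M v))
      = ∑ i, hM.eigenvalues i * ‖hM.eigenvectorBasis.repr v i‖ ^ 2 := by
  set b := hM.eigenvectorBasis
  rw [← b.repr.inner_map_map v (Matrix.toEuclideanCLM (𝕜 := ℂ) M v), PiLp.inner_apply,
    Complex.re_sum]
  congr 1; ext i
  rw [repr_clm hM]
  simp only [RCLike.inner_apply]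
  rw [show (hM.eigenvalues i : ℂ) * b.repr v i * (starRingEnd ℂ) (b.repr v i)
      = (hM.eigenvalues i : ℂ) * ((starRingEnd ℂ) (b.repr v i) * b.repr v i) by ring]
  rw [Complex.conj_mul']
  simp [← Complex.ofReal_pow]

-- existence of unit vector in span(top s+1 eigenvectors) ∩ ker Ry
lemma exists_unit {s : ℕ} (hs : s < N) {Ry Rtye : Matrix (Fin N) (Fin N) ℂ}
    (hrank : Ry.rank ≤ s) (hTil : Rtye.IsHermitian) (e : Equiv.Perm (Fin N)) :
    ∃ v : EuclideanSpace ℂ (Fin N), ‖v‖ = 1 ∧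
      Matrix.toEuclideanCLM (𝕜 := ℂ) Ry v = 0 ∧
      (∀ i : Fin N, (∀ l : Fin (s+1), i ≠ e (Fin.castLE hs l)) →
        hTil.eigenvectorBasis.repr v i = 0) := by
  classical
  set b := hTil.eigenvectorBasis with hb
  set g : Fin (s+1) → EuclideanSpace ℂ (Fin N) := fun l => b (e (Fin.castLE hs l)) with hgdef
  have hginj : Function.Injective g := by
    intro a a' h
    have hbinj : Function.Injective b := b.orthonormal.linearIndependent.injective
    exact Fin.castLE_injective hs (e.injective (hbinj h))
  have hgli : LinearIndependent ℂ g :=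
    b.orthonormal.linearIndependent.comp _ (fun a a' h =>
      Fin.castLE_injective hs (e.injective h))
  set U := Submodule.span ℂ (Set.range g) with hU
  have hUfin : Module.finrank ℂ U = s + 1 := by
    rw [hU, finrank_span_eq_card hgli, Fintype.card_fin]
  set K := LinearMap.ker (Matrix.toEuclideanLin (𝕜 := ℂ) Ry) with hK
  have hKfin : N - s ≤ Module.finrank ℂ K := by
    have h1 := LinearMap.finrank_range_add_finrank_ker (Matrix.toEuclideanLin (𝕜 := ℂ) Ry)
    have h2 : Module.finrank ℂ (LinearMap.range (Matrix.toEuclideanLin (𝕜 := ℂ) Ry)) = Ry.rank := by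
      rw [Matrix.rank_eq_finrank_range_toLin Ry (PiLp.basisFun 2 ℂ (Fin N))
        (PiLp.basisFun 2 ℂ (Fin N)), Matrix.toEuclideanLin_eq_toLin]
    have h3 : Module.finrank ℂ (EuclideanSpace ℂ (Fin N)) = N := by
      simp [finrank_euclideanSpace]
    rw [hK]
    omega
  have hdim : 0 < Module.finrank ℂ ↥(U ⊓ K) := by
    have hsum := Submodule.finrank_sup_add_finrank_inf_eq U K
    have hle : Module.finrank ℂ ↥(U ⊔ K) ≤ N := by
      have := Submodule.finrank_le (U ⊔ K)
      simpa [finrank_euclideanSpace] using this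
    omega
  obtain ⟨⟨v, hvmem⟩, hvne⟩ := Module.finrank_pos_iff_exists_ne_zero.mp hdim
  have hv0 : v ≠ 0 := by simpa [Submodule.mk_eq_zero] using hvne
  refine ⟨(‖v‖ : ℂ)⁻¹ • v, ?_, ?_, ?_⟩
  · rw [norm_smul]
    simp [norm_ne_zero_iff.mpr hv0, inv_mul_cancel₀]
  · have hker : Matrix.toEuclideanLin (𝕜 := ℂ) Ry v = 0 :=
      (LinearMap.mem_ker).mp (hvmem.2)
    have : Matrix.toEuclideanCLM (𝕜 := ℂ) Ry v = 0 := by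
      have hco := congrFun (congrArg DFunLike.coe
        (Matrix.coe_toEuclideanCLM_eq_toEuclideanLin (𝕜 := ℂ) Ry)) v
      simpa [hker] using hco
    rw [_root_.map_smul, this, smul_zero]
  · intro i hi
    rw [b.repr.map_smul]
    have : b.repr v i = 0 := by
      have hvU : v ∈ U := hvmem.1
      have key : ∀ x ∈ U, b.repr x i = 0 := by
        intro x hx
        induction hx using Submodule.span_induction with
        | mem x hx =>
          obtain ⟨l, rfl⟩ := hx
          have : b.repr (g l) = EuclideanSpace.single (e (Fin.castLE hs l)) 1 :=
            b.repr_self _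
          rw [this, EuclideanSpace.single_apply, if_neg]
          exact fun h => hi l h
        | zero => simp
        | add x y _ _ hx hy => simp [hx, hy]
        | smul c x _ hx => simp [hx]
      exact key v hvU
    simp [this]

lemma key_bound {s : ℕ} (hs : s < N)
    {Rye Rtye Ry : Matrix (Fin N) (Fin N) ℂ} {σsq : ℝ}
    (hRy : Ry.PosSemidef) (hrank : Ry.rank ≤ s)
    (hRye : Rye = Ry + (σsq : ℂ) • (1 : Matrix (Fin N) (Fin N) ℂ))
    (hTil : Rtye.IsHermitian)
    {lam : Fin N → ℝ} (hanti : Antitone lam)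
    (hperm : ∃ e : Equiv.Perm (Fin N), ∀ l, lam l = hTil.eigenvalues (e l)) :
    ∀ l : Fin N, s ≤ (l : ℕ) → |lam l - σsq| ≤ specNorm (Rye - Rtye) := by
  classical
  obtain ⟨e, he⟩ := hperm
  have hRyeV : ∀ v : EuclideanSpace ℂ (Fin N),
      Complex.re (@inner ℂ _ _ v (Matrix.toEuclideanCLM (𝕜 := ℂ) Rye v))
        = Complex.re (@inner ℂ _ _ v (Matrix.toEuclideanCLM (𝕜 := ℂ) Ry v)) + σsq * ‖v‖ ^ 2 := by
    intro v
    rw [hRye, map_add, _root_.map_smul, _root_.map_one, ContinuousLinearMap.add_apply,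
      ContinuousLinearMap.smul_apply, ContinuousLinearMap.one_apply,
      inner_add_right, inner_smul_right, inner_self_eq_norm_sq_to_K]
    push_cast
    simp
    left
    rw [← Complex.ofReal_pow, Complex.ofReal_re]
  have hdec : ∀ v : EuclideanSpace ℂ (Fin N),
      Complex.re (@inner ℂ _ _ v (Matrix.toEuclideanCLM (𝕜 := ℂ) Rtye v))
        = Complex.re (@inner ℂ _ _ v (Matrix.toEuclideanCLM (𝕜 := ℂ) Rye v))
          - Complex.re (@inner ℂ _ _ v (Matrix.toEuclideanCLM (𝕜 := ℂ) (Rye - Rtye) v)) := by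
    intro v
    rw [map_sub, ContinuousLinearMap.sub_apply, inner_sub_right]
    simp
  have hlow : ∀ l : Fin N, σsq - specNorm (Rye - Rtye) ≤ lam l := by
    intro l
    set v := hTil.eigenvectorBasis (e l) with hv
    have hvnorm : ‖v‖ = 1 := hTil.eigenvectorBasis.orthonormal.1 (e l)
    have h1 : Complex.re (@inner ℂ _ _ v (Matrix.toEuclideanCLM (𝕜 := ℂ) Rtye v)) = lam l := by
      rw [clm_eigen hTil (e l), inner_smul_right, inner_self_eq_norm_sq_to_K, hvnorm, he l]
      norm_num
    have h2 := psd_re_nonneg hRy v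
    have h3 := re_inner_le (Rye - Rtye) v hvnorm
    have h4 := hRyeV v
    have h5 := hdec v
    rw [hvnorm] at h4
    rw [h1, h4] at h5
    have hab := abs_le.mp h3
    nlinarith [hab.1, hab.2]
  have hupp : lam ⟨s, hs⟩ ≤ σsq + specNorm (Rye - Rtye) := by
    obtain ⟨v, hvnorm, hker, hcoef⟩ := exists_unit hs hrank hTil e
    have h1 : lam ⟨s, hs⟩ ≤ Complex.re (@inner ℂ _ _ v (Matrix.toEuclideanCLM (𝕜 := ℂ) Rtye v)) := by
      rw [re_inner_eigen hTil v]
      have hterm : ∀ i : Fin N, i ∈ Finset.univ →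
          lam ⟨s, hs⟩ * ‖hTil.eigenvectorBasis.repr v i‖ ^ 2
            ≤ hTil.eigenvalues i * ‖hTil.eigenvectorBasis.repr v i‖ ^ 2 := by
        intro i _
        by_cases hci : hTil.eigenvectorBasis.repr v i = 0
        · simp [hci]
        · have hex : ∃ l : Fin (s+1), i = e (Fin.castLE hs l) := by
            by_contra hcon
            push_neg at hcon
            exact hci (hcoef i hcon)
          obtain ⟨l, rfl⟩ := hex
          have heig : hTil.eigenvalues (e (Fin.castLE hs l)) = lam (Fin.castLE hs l) :=
            (he _).symm
          rw [heig]
          have hmono : lam ⟨s, hs⟩ ≤ lam (Fin.castLE hs l) := by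
            apply hanti
            rw [Fin.le_def]
            simpa using Fin.is_le l
          exact mul_le_mul_of_nonneg_right hmono (sq_nonneg _)
      calc lam ⟨s, hs⟩ = lam ⟨s, hs⟩ * ‖v‖ ^ 2 := by rw [hvnorm]; ring
        _ = ∑ i, lam ⟨s, hs⟩ * ‖hTil.eigenvectorBasis.repr v i‖ ^ 2 := by
            rw [← Finset.mul_sum, parseval hTil.eigenvectorBasis v]
        _ ≤ ∑ i, hTil.eigenvalues i * ‖hTil.eigenvectorBasis.repr v i‖ ^ 2 :=
            Finset.sum_le_sum hterm
    have h2 : Complex.re (@inner ℂ _ _ v (Matrix.toEuclideanCLM (𝕜 := ℂ) Rye v)) = σsq := by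
      rw [hRyeV v, hvnorm, hker]
      simp
    have h3 := re_inner_le (Rye - Rtye) v hvnorm
    have h5 := hdec v
    rw [h2] at h5
    have hab := (abs_le.mp h3).1
    linarith [h1, h5, hab]
  intro l hl
  have hls : lam l ≤ lam ⟨s, hs⟩ := hanti (by rw [Fin.le_def]; exact hl)
  rw [abs_le]
  constructor
  · linarith [hlow l]
  · linarith [hls, hupp]

theorem stmt15 {N s : ℕ} (hs : s < N)
    (Rye Rtye Ry : Matrix (Fin N) (Fin N) ℂ) (σsq : ℝ) (hσ : 0 < σsq)
    (hRy : Ry.PosSemidef) (hrank : Ry.rank ≤ s)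
    (hRye : Rye = Ry + (σsq : ℂ) • (1 : Matrix (Fin N) (Fin N) ℂ))
    (hTil : Rtye.IsHermitian)
    (lam : Fin N → ℝ) (hanti : Antitone lam)
    (hperm : ∃ e : Equiv.Perm (Fin N), ∀ l, lam l = hTil.eigenvalues (e l))
    (σhsq : ℝ)
    (hσh : σhsq = (1 / ((N : ℝ) - s)) * ∑ l ∈ Finset.univ.filter (fun l : Fin N => s ≤ (l : ℕ)), lam l)
    (Rh : Matrix (Fin N) (Fin N) ℂ)
    (hRh : Rh = Rtye - (σhsq : ℂ) • (1 : Matrix (Fin N) (Fin N) ℂ)) :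
    specNorm (Ry - Rh) ≤ specNorm (Rye - Rtye) + |σsq - σhsq| ∧
    specNorm (Rye - Rtye) + |σsq - σhsq| ≤ 2 * specNorm (Rye - Rtye) := by
  classical
  set D := specNorm (Rye - Rtye) with hD
  -- Part 2 core : |σsq - σhsq| ≤ D
  have hkey := key_bound hs hRy hrank hRye hTil hanti hperm
  have hcard : (Finset.univ.filter (fun l : Fin N => s ≤ (l : ℕ))).card = N - s := by
    have h1 : (Finset.univ.filter (fun l : Fin N => s ≤ (l : ℕ))) =
        Finset.Ici (⟨s, hs⟩ : Fin N) := by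
      ext l; simp [Fin.le_def]
    rw [h1, Fin.card_Ici]
  have hc : ((N - s : ℕ) : ℝ) = (N : ℝ) - s := by
    rw [Nat.cast_sub (le_of_lt hs)]
  have hcpos : (0 : ℝ) < (N : ℝ) - s := by
    rw [← hc]; exact_mod_cast Nat.sub_pos_of_lt hs
  have habs : |σsq - σhsq| ≤ D := by
    have hdiff : σhsq - σsq
        = (1 / ((N : ℝ) - s)) * ∑ l ∈ Finset.univ.filter (fun l : Fin N => s ≤ (l : ℕ)), (lam l - σsq) := by
      rw [hσh, Finset.sum_sub_distrib, Finset.sum_const, hcard, nsmul_eq_mul, hc]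
      field_simp
    have hsumabs : |∑ l ∈ Finset.univ.filter (fun l : Fin N => s ≤ (l : ℕ)), (lam l - σsq)|
        ≤ ((N : ℝ) - s) * D := by
      calc |∑ l ∈ Finset.univ.filter (fun l : Fin N => s ≤ (l : ℕ)), (lam l - σsq)|
          ≤ ∑ l ∈ Finset.univ.filter (fun l : Fin N => s ≤ (l : ℕ)), |lam l - σsq| :=
            Finset.abs_sum_le_sum_abs _ _
        _ ≤ ∑ l ∈ Finset.univ.filter (fun l : Fin N => s ≤ (l : ℕ)), D := by
            apply Finset.sum_le_sum
            intro l hl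
            exact hkey l (by simpa using hl)
        _ = ((N : ℝ) - s) * D := by
            rw [Finset.sum_const, hcard, nsmul_eq_mul, hc]
    have : |σhsq - σsq| ≤ D := by
      rw [hdiff, abs_mul, abs_of_pos (by positivity : (0:ℝ) < 1 / ((N:ℝ) - s))]
      calc 1 / ((N : ℝ) - s) * |∑ l ∈ Finset.univ.filter (fun l : Fin N => s ≤ (l : ℕ)), (lam l - σsq)|
          ≤ 1 / ((N : ℝ) - s) * (((N : ℝ) - s) * D) := by
            apply mul_le_mul_of_nonneg_left hsumabs
            positivity
        _ = D := by field_simp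
    rwa [abs_sub_comm]
  have hDnn : 0 ≤ D := le_trans (abs_nonneg _) habs
  constructor
  · -- triangle inequality part
    haveI : Nonempty (Fin N) := ⟨⟨0, lt_of_le_of_lt (Nat.zero_le s) hs⟩⟩
    haveI : Nontrivial (EuclideanSpace ℂ (Fin N)) := inferInstance
    have hmat : Ry - Rh = (Rye - Rtye) - ((σsq - σhsq : ℝ) : ℂ) • (1 : Matrix (Fin N) (Fin N) ℂ) := by
      subst hRye hRh
      push_cast
      module
    have hone : ‖((σsq - σhsq : ℝ) : ℂ) • (1 : EuclideanSpace ℂ (Fin N) →L[ℂ] EuclideanSpace ℂ (Fin N))‖ ≤ |σsq - σhsq| := by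
      have h1 := ContinuousLinearMap.opNorm_smul_le ((σsq - σhsq : ℝ) : ℂ)
        (1 : EuclideanSpace ℂ (Fin N) →L[ℂ] EuclideanSpace ℂ (Fin N))
      rw [norm_one, mul_one] at h1
      refine le_trans h1 (le_of_eq ?_)
      rw [Complex.norm_real, Real.norm_eq_abs]
    rw [hmat, specNorm]
    rw [map_sub, _root_.map_smul, _root_.map_one]
    calc ‖Matrix.toEuclideanCLM (𝕜 := ℂ) (Rye - Rtye) - ((σsq - σhsq : ℝ) : ℂ) • 1‖
        ≤ ‖Matrix.toEuclideanCLM (𝕜 := ℂ) (Rye - Rtye)‖ + ‖((σsq - σhsq : ℝ) : ℂ) • (1 : EuclideanSpace ℂ (Fin N) →L[ℂ] EuclideanSpace ℂ (Fin N))‖ :=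
          norm_sub_le _ _
      _ ≤ D + |σsq - σhsq| := by
          rw [hD, specNorm]
          exact add_le_add le_rfl hone
  · linarith
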